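/- Let m ≥ 1 be an integer and let (a,b) ∈ 𝒫 satisfy a < 0 < b, 1 ≤ −1/a ≤ b + 1, and a ≤ −1/b + m ≤ a + 1. Define c₁ = b − 1 and c_{p+1} = −1/c_p − 2 for 1 ≤ p ≤ m − 1. Define h⁺ on [a,b) by: h⁺(x) = 1/(x + (p+1)/p) for c_p ≤ x < c_{p+1} (1 ≤ p ≤ m−1), h⁺(x) = 1/(x + (m+1)/m) for c_m ≤ x < −1/a − 1, h⁺(x) = 1/(x + 1) for −1/a − 1 ≤ x < b, and h⁺(x) = 0 for a ≤ x < c₁. Define h⁻ on [a,b) by: h⁻(x) = 1/(m − x) for a ≤ x < −1/b + m, h⁻(x) = 1/(m + 1 − x) for −1/b + m ≤ x < a + 1, and h⁻(x) = 0 for a + 1 ≤ x < b. Set h_{a,b} = h⁺ + h⁻. Then ∫_a^b h_{a,b}(x) dx = log((m − a)(1 + b)^{2−m}). -/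

import Mathlib

open MeasureTheory Filter Set

noncomputable section

/-- The parameter set 𝒫 = {(a,b) : a ≤ 0 ≤ b, b − a ≥ 1, −ab ≤ 1}. -/
def memP (a b : ℝ) : Prop := a ≤ 0 ∧ 0 ≤ b ∧ 1 ≤ b - a ∧ -(a * b) ≤ 1

/-- Generalized integer part ⌊x⌉_{a,b}. -/
def genFloor (a b x : ℝ) : ℤ :=
  if x < a then ⌊x - a⌋ else if x < b then 0 else ⌊x - b⌋ + 1

/-- Iterates x_k of the (a,b)-continued fraction algorithm. -/
def cfIter (a b x : ℝ) : ℕ → ℝ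
  | 0 => x
  | k + 1 => -1 / (cfIter a b x k - (genFloor a b (cfIter a b x k) : ℝ))

/-- The digits n_k(x) of the (a,b)-continued fraction expansion. -/
def digit (a b x : ℝ) (k : ℕ) : ℤ := genFloor a b (cfIter a b x k)

/-- Evaluation of a finite "minus" continued fraction n₀ − 1/(n₁ − 1/(⋯ − 1/n_k)). -/
def mcfEval : List ℤ → ℝ
  | [] => 0
  | [n] => (n : ℝ)
  | n :: l => (n : ℝ) - 1 / mcfEval l

/-- The k-th convergent r_k(x) of the (a,b)-continued fraction expansion. -/
def convergent (a b x : ℝ) (k : ℕ) : ℝ :=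
  mcfEval ((List.range (k + 1)).map fun i => digit a b x i)

/-- The natural extension map F_{a,b}. -/
def Fab (a b : ℝ) (p : ℝ × ℝ) : ℝ × ℝ :=
  if p.2 < a then (p.1 + 1, p.2 + 1)
  else if p.2 < b then (-1 / p.1, -1 / p.2)
  else (p.1 - 1, p.2 - 1)

/-- The attractor D_{a,b} = ⋂ₙ F_{a,b}ⁿ(ℝ² ∖ Δ). -/
def Dab (a b : ℝ) : Set (ℝ × ℝ) :=
  ⋂ n : ℕ, (Fab a b)^[n] '' {p : ℝ × ℝ | p.1 ≠ p.2}

/-- Λ_{a,b} = {(−1/u, −1/w) : (u,w) ∈ D_{a,b}, a ≤ w ≤ b}. -/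
def Lam (a b : ℝ) : Set (ℝ × ℝ) :=
  {q | ∃ p ∈ Dab a b, a ≤ p.2 ∧ p.2 ≤ b ∧ q = (-1 / p.1, -1 / p.2)}

/-- The reduction map R_{a,b}(u,w) = (−1/(u−n), −1/(w−n)), n = n₀(w). -/
def Rab (a b : ℝ) (p : ℝ × ℝ) : ℝ × ℝ :=
  (-1 / (p.1 - (genFloor a b p.2 : ℝ)), -1 / (p.2 - (genFloor a b p.2 : ℝ)))

/-- The map f_{a,b}. -/
def fab (a b x : ℝ) : ℝ :=
  if x < a then x + 1 else if x < b then -1 / x else x - 1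

/-- A forward orbit being eventually periodic. -/
def EvPer (g : ℝ → ℝ) (x : ℝ) : Prop := ∃ i j : ℕ, i < j ∧ g^[i] x = g^[j] x

/-- The finiteness condition for the pair (a,b). -/
def FinenessCondition (a b : ℝ) : Prop :=
  ((EvPer (fab a b) (-1 / a) ∧ EvPer (fab a b) (a + 1)) ∨
    ∃ m k : ℕ, (fab a b)^[m] (-1 / a) = (fab a b)^[k] (a + 1)) ∧
  ((EvPer (fab a b) (b - 1) ∧ EvPer (fab a b) (-1 / b)) ∨
    ∃ m k : ℕ, (fab a b)^[m] (b - 1) = (fab a b)^[k] (-1 / b))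

/-- The measure ρ with density 1/(w−u)² w.r.t. Lebesgue measure du dw. -/
def rho : Measure (ℝ × ℝ) :=
  volume.withDensity fun p => ENNReal.ofReal (1 / (p.2 - p.1) ^ 2)

/-- An orbit (u_k, w_k) in Λ_{a,b} realizing a bi-infinite coding sequence (n_k). -/
def IsCodingOrbit (a b : ℝ) (n : ℤ → ℤ) (u w : ℤ → ℝ) : Prop :=
  (∀ k, (u k, w k) ∈ Lam a b) ∧ (∀ k, Irrational (w k)) ∧
  (∀ k, n k = genFloor a b (w k)) ∧
  (∀ k : ℤ, u (k + 1) = -1 / (u k - (n k : ℝ)) ∧ w (k + 1) = -1 / (w k - (n k : ℝ)))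

/-- Admissible coding sequences. -/
def Admissible (a b : ℝ) (n : ℤ → ℤ) : Prop :=
  (∀ k, n k ≠ 0) ∧ ∃ u w : ℤ → ℝ, IsCodingOrbit a b n u w

/-- The reflection ψ(x,y) = (−y,−x). -/
def psi (p : ℝ × ℝ) : ℝ × ℝ := (-p.2, -p.1)

/-- (a′,b′) is dual to (a,b) if ψ(D_{a,b}) = D_{a′,b′}. -/
def IsDual (a b a' b' : ℝ) : Prop := psi '' Dab a b = Dab a' b'

/-- The Gauss-type map f̂_{a,b}. -/
def fhat (a b x : ℝ) : ℝ :=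
  if x = 0 then 0 else -1 / x - (genFloor a b (-1 / x) : ℝ)

/-- The natural extension F̂_{a,b} of the Gauss-type map. -/
def Fhat (a b : ℝ) (p : ℝ × ℝ) : ℝ × ℝ :=
  (fhat a b p.1, -1 / (p.2 - (genFloor a b (-1 / p.1) : ℝ)))

/-- Λ̂_{a,b} = {(−1/w, u) : (u,w) ∈ Λ_{a,b}}. -/
def LamHat (a b : ℝ) : Set (ℝ × ℝ) := {q | ∃ p ∈ Lam a b, q = (-1 / p.2, p.1)}

/-- The normalizing constant K_{a,b} = ∫_{Λ̂_{a,b}} dx dy/(1+xy)². -/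
def Kab (a b : ℝ) : ENNReal :=
  ∫⁻ p in LamHat a b, ENNReal.ofReal (1 / (1 + p.1 * p.2) ^ 2)

/-- The invariant probability measure ν_{a,b} of F̂_{a,b}. -/
def nuab (a b : ℝ) : Measure (ℝ × ℝ) :=
  (Kab a b)⁻¹ •
    ((volume.restrict (LamHat a b)).withDensity fun p => ENNReal.ofReal (1 / (1 + p.1 * p.2) ^ 2))

/-- The invariant probability measure μ_{a,b} of f̂_{a,b}: pushforward of ν_{a,b} by (x,y) ↦ x. -/
def muab (a b : ℝ) : Measure ℝ := (nuab a b).map Prod.fst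

/-- Denominators of the convergents, shifted by one: qden 0 = q₋₁ = 0, qden (k+1) = q_k. -/
def qden (a b x : ℝ) : ℕ → ℤ
  | 0 => 0
  | 1 => 1
  | k + 2 => digit a b x (k + 1) * qden a b x (k + 1) - qden a b x k


/-! ### Auxiliary lemmas for stmt18 -/

section Stmt18Aux

open MeasureTheory Set

lemma stmt18_aux_intble (a b l u : ℝ) (f : ℝ → ℝ) (hal : a ≤ l) (hlu : l ≤ u) (hub : u ≤ b)
    (hf : ContinuousOn f (Icc l u)) :
    IntervalIntegrable (Set.indicator (Set.Ico l u) f) volume a b := by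
  have hab : a ≤ b := hal.trans (hlu.trans hub)
  rw [intervalIntegrable_iff_integrableOn_Ioc_of_le hab]
  rw [IntegrableOn, integrable_indicator_iff measurableSet_Ico]
  have h1 : IntegrableOn f (Ico l u) volume :=
    (hf.integrableOn_Icc).mono_set Ico_subset_Icc_self
  have h2 : (volume.restrict (Ioc a b)).restrict (Ico l u) ≤ volume.restrict (Ico l u) := by
    rw [Measure.restrict_restrict measurableSet_Ico]
    exact Measure.restrict_mono inter_subset_left le_rfl
  exact MeasureTheory.Integrable.mono_measure h1 h2

lemma stmt18_aux_ind_eq (a b l u : ℝ) (f : ℝ → ℝ) (hal : a ≤ l) (hlu : l ≤ u) (hub : u ≤ b) :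
    ∫ x in a..b, Set.indicator (Set.Ico l u) f x = ∫ x in l..u, f x := by
  have hab : a ≤ b := hal.trans (hlu.trans hub)
  rw [intervalIntegral.integral_of_le hab, intervalIntegral.integral_of_le hlu,
    setIntegral_indicator measurableSet_Ico]
  apply setIntegral_congr_set
  have h : (Ioc a b ∩ Ico l u : Set ℝ) =ᵐ[volume] (Ioc a b ∩ Ioc l u : Set ℝ) :=
        (Filter.EventuallyEq.refl _ _).inter Ico_ae_eq_Ioc
  rwa [inter_eq_self_of_subset_right (Ioc_subset_Ioc hal hub)] at h

lemma stmt18_aux_cont (l u c : ℝ) (h0 : 0 < l + c) :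
    ContinuousOn (fun t : ℝ => 1 / (t + c)) (Icc l u) := by
  apply ContinuousOn.div continuousOn_const (by fun_prop)
  intro x hx
  have h := hx.1
  intro hc
  nlinarith

lemma stmt18_aux_cont_neg (l u c : ℝ) (h0 : 0 < c - u) :
    ContinuousOn (fun t : ℝ => 1 / (c - t)) (Icc l u) := by
  apply ContinuousOn.div continuousOn_const (by fun_prop)
  intro x hx
  have h := hx.2
  intro hc
  nlinarith

lemma stmt18_piece_intble (a b l u c : ℝ) (hal : a ≤ l) (hlu : l ≤ u) (hub : u ≤ b)
    (h0 : 0 < l + c) :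
    IntervalIntegrable (Set.indicator (Set.Ico l u) (fun t => 1 / (t + c))) volume a b :=
  stmt18_aux_intble a b l u _ hal hlu hub (stmt18_aux_cont l u c h0)

lemma stmt18_piece_intble_neg (a b l u c : ℝ) (hal : a ≤ l) (hlu : l ≤ u) (hub : u ≤ b)
    (h0 : 0 < c - u) :
    IntervalIntegrable (Set.indicator (Set.Ico l u) (fun t => 1 / (c - t))) volume a b :=
  stmt18_aux_intble a b l u _ hal hlu hub (stmt18_aux_cont_neg l u c h0)

lemma stmt18_piece_eval (a b l u c : ℝ) (hal : a ≤ l) (hlu : l ≤ u) (hub : u ≤ b)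
    (h0 : 0 < l + c) :
    ∫ x in a..b, Set.indicator (Set.Ico l u) (fun t => 1 / (t + c)) x =
      Real.log (u + c) - Real.log (l + c) := by
  rw [stmt18_aux_ind_eq a b l u _ hal hlu hub]
  have h0' : 0 < u + c := by linarith
  rw [intervalIntegral.integral_comp_add_right (fun x => 1 / x) c]
  rw [integral_one_div]
  · rw [Real.log_div (by linarith) (by linarith)]
  · rw [uIcc_of_le (by linarith)]
    intro h
    exact absurd h.1 (by linarith)

lemma stmt18_piece_eval_neg (a b l u c : ℝ) (hal : a ≤ l) (hlu : l ≤ u) (hub : u ≤ b)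
    (h0 : 0 < c - u) :
    ∫ x in a..b, Set.indicator (Set.Ico l u) (fun t => 1 / (c - t)) x =
      Real.log (c - l) - Real.log (c - u) := by
  rw [stmt18_aux_ind_eq a b l u _ hal hlu hub]
  have h0' : 0 < c - l := by linarith
  rw [intervalIntegral.integral_comp_sub_left (fun x => 1 / x) c]
  rw [integral_one_div]
  · rw [Real.log_div (by linarith) (by linarith)]
  · rw [uIcc_of_le (by linarith)]
    intro h
    exact absurd h.1 (by linarith)

end Stmt18Aux

/-- The sequence c_p: cseq b (p−1) = c_p, so c₁ = b−1 and c_{p+1} = −1/c_p − 2. -/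
def cseq (b : ℝ) : ℕ → ℝ
  | 0 => b - 1
  | p + 1 => -1 / cseq b p - 2

/-- The function h⁺_{a,b}. -/
def hplus (a b : ℝ) (m : ℕ) (x : ℝ) : ℝ :=
  (∑ p ∈ Finset.Icc 1 (m - 1),
    Set.indicator (Set.Ico (cseq b (p - 1)) (cseq b p)) (fun t => 1 / (t + ((p : ℝ) + 1) / p)) x)
  + Set.indicator (Set.Ico (cseq b (m - 1)) (-1 / a - 1)) (fun t => 1 / (t + ((m : ℝ) + 1) / m)) x
  + Set.indicator (Set.Ico (-1 / a - 1) b) (fun t => 1 / (t + 1)) x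

/-- The function h⁻_{a,b}. -/
def hminus (a b : ℝ) (m : ℕ) (x : ℝ) : ℝ :=
  Set.indicator (Set.Ico a (-1 / b + m)) (fun t => 1 / ((m : ℝ) - t)) x
  + Set.indicator (Set.Ico (-1 / b + m) (a + 1)) (fun t => 1 / ((m : ℝ) + 1 - t)) x

set_option maxHeartbeats 2000000 in
theorem stmt18 (a b : ℝ) (m : ℕ) (hm : 1 ≤ m) (hP : memP a b) (ha : a < 0) (hb : 0 < b)
    (h1 : 1 ≤ -1 / a) (h2 : -1 / a ≤ b + 1) (h3 : a ≤ -1 / b + m) (h4 : -1 / b + m ≤ a + 1) :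
    ∫ x in a..b, (hplus a b m x + hminus a b m x) =
      Real.log (((m : ℝ) - a) * (1 + b) ^ (2 - (m : ℤ))) := by
  obtain ⟨hPa, hPb, hP3, hP4⟩ := hP
  have hM1 : (1:ℝ) ≤ (m:ℝ) := by exact_mod_cast hm
  have hM0 : (0:ℝ) < (m:ℝ) := by linarith
  have hna : 0 < -a := by linarith
  have hinva : -1/a = 1/(-a) := by ring
  have H1 : -a ≤ 1 := by
    rw [hinva, le_div_iff₀ hna] at h1; linarith
  have hnb : (-1/b : ℝ) = -(1/b) := by ring
  rw [hnb] at h3 h4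
  have h3' : 1/b ≤ (m:ℝ) - a := by linarith
  have h4' : (m:ℝ) - 1 - a ≤ 1/b := by linarith
  have H3 : 1 ≤ ((m:ℝ) - a) * b := by rwa [div_le_iff₀ hb] at h3'
  have H4 : ((m:ℝ) - 1 - a) * b ≤ 1 := by rwa [le_div_iff₀ hb] at h4'
  have hkey : ((m:ℝ)-1)*b < 1 := by nlinarith [mul_pos hna hb]
  have hG5 : (0:ℝ) < 1 - ((m:ℝ)-1)*b := by linarith
  have hMA : (0:ℝ) < (m:ℝ) - a := by linarith
  have hb1 : (0:ℝ) < 1 + b := by linarith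
  have castm1 : ((m - 1 : ℕ) : ℝ) = (m:ℝ) - 1 := by
    rw [Nat.cast_sub hm, Nat.cast_one]
  -- closed form of cseq
  have cform : ∀ j : ℕ, j + 1 ≤ m → cseq b j = (((j:ℝ)+1)*b - 1)/(1 - (j:ℝ)*b) := by
    intro j
    induction j with
    | zero => intro _; simp [cseq]
    | succ j ih =>
      intro hj
      have hj' : j + 1 ≤ m := by omega
      have hjR : ((j:ℝ)+1) ≤ (m:ℝ) - 1 := by
        have : ((j:ℝ)+2) ≤ (m:ℝ) := by exact_mod_cast hj
        linarith
      have hj0 : (0:ℝ) ≤ (j:ℝ) := Nat.cast_nonneg j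
      have hjb : ((j:ℝ)+1)*b ≤ ((m:ℝ)-1)*b := mul_le_mul_of_nonneg_right hjR hb.le
      have hd2 : ((j:ℝ)+1)*b < 1 := by linarith
      have hd1 : 0 < 1 - (j:ℝ)*b := by nlinarith
      have hlt : cseq b j < 0 := by
        rw [ih hj']; exact div_neg_of_neg_of_pos (by linarith) hd1
      have hne : cseq b j ≠ 0 := ne_of_lt hlt
      show -1 / cseq b j - 2 = _
      rw [ih hj']
      have hd3 : 0 < 1 - ((j:ℝ)+1)*b := by linarith
      have hne1 : ((j:ℝ)+1)*b - 1 ≠ 0 := by linarith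
      push_cast
      field_simp
      ring
  -- ordering facts
  have hfacts : ∀ j : ℕ, j + 1 ≤ m → a ≤ cseq b j ∧ cseq b j ≤ -1/a - 1 := by
    intro j hj
    have hjR : (j:ℝ) ≤ (m:ℝ) - 1 := by
      have : ((j:ℝ)+1) ≤ (m:ℝ) := by exact_mod_cast hj
      linarith
    have hj0 : (0:ℝ) ≤ (j:ℝ) := Nat.cast_nonneg j
    have hjb : (j:ℝ)*b ≤ ((m:ℝ)-1)*b := mul_le_mul_of_nonneg_right hjR hb.le
    have hd1 : 0 < 1 - (j:ℝ)*b := by linarith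
    rw [cform j hj]
    constructor
    · rw [le_div_iff₀ hd1]
      nlinarith [mul_nonneg hj0 hb.le]
    · have e : -1/a - 1 = (1+a)/(-a) := by
        field_simp [ne_of_lt ha]
        ring
      rw [e, div_le_div_iff₀ hd1 hna]
      nlinarith
  have hmono : ∀ j : ℕ, j + 2 ≤ m → cseq b j ≤ cseq b (j+1) := by
    intro j hj
    have hjR : ((j:ℝ)+1) ≤ (m:ℝ) - 1 := by
      have : ((j:ℝ)+2) ≤ (m:ℝ) := by exact_mod_cast hj
      linarith
    have hj0 : (0:ℝ) ≤ (j:ℝ) := Nat.cast_nonneg j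
    have hjb : ((j:ℝ)+1)*b ≤ ((m:ℝ)-1)*b := mul_le_mul_of_nonneg_right hjR hb.le
    have hd3 : 0 < 1 - ((j:ℝ)+1)*b := by linarith
    have hd1 : 0 < 1 - (j:ℝ)*b := by nlinarith
    rw [cform j (by omega), cform (j+1) (by omega)]
    push_cast
    rw [div_le_div_iff₀ hd1 hd3]
    nlinarith [sq_nonneg b]
  have hend : -1/a - 1 ≤ b := by linarith
  have ha_le : a ≤ -1/a - 1 := by nlinarith
  have hab : a ≤ b := by linarith
  have cm1 : cseq b (m-1) = ((m:ℝ)*b - 1)/(1 - ((m:ℝ)-1)*b) := by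
    rw [cform (m-1) (by omega), castm1]
    ring_nf
  -- per-summand facts
  have pfacts : ∀ q : ℕ, q + 2 ≤ m →
      a ≤ cseq b q ∧ cseq b q ≤ cseq b (q+1) ∧ cseq b (q+1) ≤ b ∧
      0 < 1 - (q:ℝ)*b ∧ 0 < 1 - ((q:ℝ)+1)*b ∧
      cseq b q + ((q:ℝ)+2)/((q:ℝ)+1) = (1+b)/(((q:ℝ)+1)*(1-(q:ℝ)*b)) ∧
      cseq b (q+1) + ((q:ℝ)+2)/((q:ℝ)+1) = 1/(((q:ℝ)+1)*(1-((q:ℝ)+1)*b)) := by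
    intro q hq
    have hjR : ((q:ℝ)+1) ≤ (m:ℝ) - 1 := by
      have : ((q:ℝ)+2) ≤ (m:ℝ) := by exact_mod_cast hq
      linarith
    have hj0 : (0:ℝ) ≤ (q:ℝ) := Nat.cast_nonneg q
    have hjb : ((q:ℝ)+1)*b ≤ ((m:ℝ)-1)*b := mul_le_mul_of_nonneg_right hjR hb.le
    have hd3 : 0 < 1 - ((q:ℝ)+1)*b := by linarith
    have hd1 : 0 < 1 - (q:ℝ)*b := by nlinarith
    have hq1 : (0:ℝ) < (q:ℝ)+1 := by linarith
    refine ⟨(hfacts q (by omega)).1, hmono q hq,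
      le_trans (hfacts (q+1) (by omega)).2 hend, hd1, hd3, ?_, ?_⟩
    · rw [cform q (by omega)]
      field_simp
      ring
    · rw [cform (q+1) (by omega)]
      push_cast
      field_simp
      ring
  -- integrability of the summands
  have hint : ∀ p ∈ Finset.Icc 1 (m-1), IntervalIntegrable
      (fun x => Set.indicator (Set.Ico (cseq b (p - 1)) (cseq b p))
        (fun t => 1 / (t + ((p : ℝ) + 1) / p)) x) volume a b := by
    intro p hp
    rw [Finset.mem_Icc] at hp
    obtain ⟨q, rfl⟩ : ∃ q, p = q + 1 := ⟨p - 1, by omega⟩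
    obtain ⟨f1, f2, f3, f4, f5, f6, f7⟩ := pfacts q (by omega)
    simp only [Nat.add_sub_cancel]
    apply stmt18_piece_intble a b _ _ _ f1 f2 f3
    have e : ((↑(q+1):ℝ) + 1)/(↑(q+1):ℝ) = ((q:ℝ)+2)/((q:ℝ)+1) := by push_cast; ring
    rw [e, f6]
    positivity
  -- value of the sum
  have hsum : ∫ x in a..b, (∑ p ∈ Finset.Icc 1 (m-1),
      Set.indicator (Set.Ico (cseq b (p - 1)) (cseq b p))
        (fun t => 1 / (t + ((p : ℝ) + 1) / p)) x) =
      -Real.log (1 - ((m:ℝ)-1)*b) - ((m:ℝ)-1) * Real.log (1+b) := by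
    rw [intervalIntegral.integral_finset_sum hint]
    have hval : ∀ p ∈ Finset.Icc 1 (m-1),
        (∫ x in a..b, Set.indicator (Set.Ico (cseq b (p - 1)) (cseq b p))
          (fun t => 1 / (t + ((p : ℝ) + 1) / p)) x) =
        Real.log (1 - ((p:ℝ)-1)*b) - Real.log (1 - (p:ℝ)*b) - Real.log (1+b) := by
      intro p hp
      rw [Finset.mem_Icc] at hp
      obtain ⟨q, rfl⟩ : ∃ q, p = q + 1 := ⟨p - 1, by omega⟩
      obtain ⟨f1, f2, f3, f4, f5, f6, f7⟩ := pfacts q (by omega)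
      have hq1 : (0:ℝ) < (q:ℝ)+1 := by positivity
      simp only [Nat.add_sub_cancel]
      have e : ((↑(q+1):ℝ) + 1)/(↑(q+1):ℝ) = ((q:ℝ)+2)/((q:ℝ)+1) := by push_cast; ring
      rw [show (fun t : ℝ => 1 / (t + ((↑(q+1):ℝ) + 1) / (↑(q+1):ℝ))) =
        (fun t : ℝ => 1 / (t + ((q:ℝ)+2)/((q:ℝ)+1))) from by rw [e]]
      rw [stmt18_piece_eval a b _ _ _ f1 f2 f3 (by rw [f6]; positivity)]
      rw [f6, f7]
      rw [Real.log_div one_ne_zero (by positivity), Real.log_div (by positivity) (by positivity),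
        Real.log_mul (ne_of_gt hq1) (ne_of_gt f5), Real.log_mul (ne_of_gt hq1) (ne_of_gt f4),
        Real.log_one]
      push_cast
      ring
    rw [Finset.sum_congr rfl hval]
    rw [show Finset.Icc 1 (m-1) = Finset.Ico 1 m from by
      rw [← Finset.Ico_add_one_right_eq_Icc]; congr 1; omega]
    rw [Finset.sum_Ico_eq_sum_range]
    have hre : ∀ i ∈ Finset.range (m - 1),
        (Real.log (1 - ((↑(1+i):ℝ)-1)*b) - Real.log (1 - (↑(1+i):ℝ)*b) - Real.log (1+b)) =
        ((fun j : ℕ => Real.log (1 - (j:ℝ)*b)) i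
          - (fun j : ℕ => Real.log (1 - (j:ℝ)*b)) (i+1)) - Real.log (1+b) := by
      intro i _
      push_cast
      ring_nf
    rw [Finset.sum_congr rfl hre, Finset.sum_sub_distrib,
      Finset.sum_range_sub' (fun j : ℕ => Real.log (1 - (j:ℝ)*b)),
      Finset.sum_const, Finset.card_range, nsmul_eq_mul, castm1]
    simp only [Nat.cast_zero, zero_mul, sub_zero, Real.log_one, castm1]
    ring
  -- integrability of the remaining four pieces
  obtain ⟨g1, g2⟩ := hfacts (m-1) (by omega)
  have lA : cseq b (m-1) + ((m:ℝ)+1)/(m:ℝ) = (1+b)/((m:ℝ)*(1 - ((m:ℝ)-1)*b)) := by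
    rw [cm1, div_add_div _ _ (ne_of_gt hG5) (ne_of_gt hM0), div_eq_div_iff (mul_ne_zero (ne_of_gt hG5) (ne_of_gt hM0)) (mul_ne_zero (ne_of_gt hM0) (ne_of_gt hG5))]; ring
  have uA : -1/a - 1 + ((m:ℝ)+1)/(m:ℝ) = ((m:ℝ)-a)/((-a)*(m:ℝ)) := by
    field_simp [ne_of_lt ha, ne_of_gt hM0]; ring
  have lB : -1/a - 1 + 1 = (-a)⁻¹ := by field_simp [ne_of_lt ha]; ring
  have uB : b + 1 = 1 + b := by ring
  have uC : (m:ℝ) - (-(1/b) + (m:ℝ)) = b⁻¹ := by field_simp [ne_of_gt hb]; ring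
  have lC : (m:ℝ) - a = (m:ℝ) - a := rfl
  have lD : (m:ℝ) + 1 - (-(1/b) + (m:ℝ)) = (1+b)/b := by field_simp [ne_of_gt hb]; ring
  have uD : (m:ℝ) + 1 - (a + 1) = (m:ℝ) - a := by ring
  have hCu : -(1/b) + (m:ℝ) ≤ b := by nlinarith
  have hDu : a + 1 ≤ b := by linarith
  have iA : IntervalIntegrable (fun x => Set.indicator
      (Set.Ico (cseq b (m - 1)) (-1 / a - 1)) (fun t => 1 / (t + ((m:ℝ) + 1) / m)) x)
      volume a b :=
    stmt18_piece_intble a b _ _ _ g1 g2 hend (by rw [lA]; positivity)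
  have iB : IntervalIntegrable (fun x => Set.indicator
      (Set.Ico (-1 / a - 1) b) (fun t => 1 / (t + 1)) x) volume a b :=
    stmt18_piece_intble a b _ _ _ ha_le hend le_rfl (by rw [lB]; positivity)
  have iC : IntervalIntegrable (fun x => Set.indicator
      (Set.Ico a (-(1 / b) + (m:ℝ))) (fun t => 1 / ((m:ℝ) - t)) x) volume a b :=
    stmt18_piece_intble_neg a b _ _ _ le_rfl h3 hCu (by rw [uC]; positivity)
  have iD : IntervalIntegrable (fun x => Set.indicator
      (Set.Ico (-(1 / b) + (m:ℝ)) (a + 1)) (fun t => 1 / ((m:ℝ) + 1 - t)) x) volume a b :=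
    stmt18_piece_intble_neg a b _ _ _ h3 h4 hDu (by rw [uD]; positivity)
  have iS : IntervalIntegrable (fun x => ∑ p ∈ Finset.Icc 1 (m-1),
      Set.indicator (Set.Ico (cseq b (p - 1)) (cseq b p))
        (fun t => 1 / (t + ((p : ℝ) + 1) / p)) x) volume a b := by
    have h := IntervalIntegrable.sum (μ := volume) (a := a) (b := b)
      (Finset.Icc 1 (m-1)) hint
    have e : (fun x => ∑ p ∈ Finset.Icc 1 (m-1),
        Set.indicator (Set.Ico (cseq b (p - 1)) (cseq b p))
          (fun t => 1 / (t + ((p : ℝ) + 1) / p)) x) =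
        ∑ p ∈ Finset.Icc 1 (m-1), (fun x => Set.indicator (Set.Ico (cseq b (p - 1)) (cseq b p))
          (fun t => 1 / (t + ((p : ℝ) + 1) / p)) x) := by
      ext x; rw [Finset.sum_apply]
    rw [e]; exact h
  -- evaluate the four pieces
  have eA : ∫ x in a..b, Set.indicator (Set.Ico (cseq b (m - 1)) (-1 / a - 1))
      (fun t => 1 / (t + ((m:ℝ) + 1) / m)) x =
      (Real.log ((m:ℝ)-a) - (Real.log (-a) + Real.log (m:ℝ)))
        - (Real.log (1+b) - (Real.log (m:ℝ) + Real.log (1 - ((m:ℝ)-1)*b))) := by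
    rw [stmt18_piece_eval a b _ _ _ g1 g2 hend (by rw [lA]; positivity), lA, uA]
    rw [Real.log_div (ne_of_gt hMA) (by positivity),
      Real.log_mul (ne_of_gt hna) (ne_of_gt hM0),
      Real.log_div (ne_of_gt hb1) (by positivity),
      Real.log_mul (ne_of_gt hM0) (ne_of_gt hG5)]
  have eB : ∫ x in a..b, Set.indicator (Set.Ico (-1 / a - 1) b)
      (fun t => 1 / (t + 1)) x = Real.log (1+b) + Real.log (-a) := by
    rw [stmt18_piece_eval a b _ _ _ ha_le hend le_rfl (by rw [lB]; positivity), lB, uB,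
      Real.log_inv]
    ring
  have eC : ∫ x in a..b, Set.indicator (Set.Ico a (-(1 / b) + (m:ℝ)))
      (fun t => 1 / ((m:ℝ) - t)) x = Real.log ((m:ℝ)-a) + Real.log b := by
    rw [stmt18_piece_eval_neg a b _ _ _ le_rfl h3 hCu (by rw [uC]; positivity), uC,
      Real.log_inv]
    ring
  have eD : ∫ x in a..b, Set.indicator (Set.Ico (-(1 / b) + (m:ℝ)) (a + 1))
      (fun t => 1 / ((m:ℝ) + 1 - t)) x =
      (Real.log (1+b) - Real.log b) - Real.log ((m:ℝ)-a) := by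
    rw [stmt18_piece_eval_neg a b _ _ _ h3 h4 hDu (by rw [uD]; positivity), uD, lD,
      Real.log_div (ne_of_gt hb1) (ne_of_gt hb)]
  -- assemble
  simp only [hplus, hminus]
  rw [hnb]
  rw [intervalIntegral.integral_add ((iS.add iA).add iB) (iC.add iD),
    intervalIntegral.integral_add (iS.add iA) iB,
    intervalIntegral.integral_add iS iA,
    intervalIntegral.integral_add iC iD]
  rw [hsum, eA, eB, eC, eD]
  rw [Real.log_mul (ne_of_gt hMA) (zpow_ne_zero _ (ne_of_gt hb1)), Real.log_zpow]
  push_cast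
  ring
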